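/- Let a < b be real numbers, let g : [a,b] → (0,∞) be a log-convex function with g(a) = g(b), and let μ be the Lebesgue measure on ℝ. Then the Sugeno integral satisfies (s)∫_{[a,b]} g dμ ≤ min(g(a), b − a). -/

import Mathlib

open MeasureTheory ENNReal Set

/-- The Sugeno (fuzzy) integral of `f` on `A` with respect to `μ`:
`(s)∫_A f dμ = ⨆ α, min (α, μ (A ∩ {x | f x ≥ α}))`. -/
noncomputable def sugenoIntegral {X : Type*} [MeasurableSpace X] (μ : Measure X)
    (A : Set X) (f : X → ℝ≥0∞) : ℝ≥0∞ :=
  ⨆ α : ℝ≥0∞, min α (μ (A ∩ {x | α ≤ f x}))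

theorem sugenoIntegral_le_of_logConvex_eq_Icc (a b : ℝ) (hab : a < b) (g : ℝ → ℝ)
    (hg_pos : ∀ x ∈ Icc a b, 0 < g x)
    (hg_logconvex : ∀ x ∈ Icc a b, ∀ y ∈ Icc a b, ∀ t ∈ Icc (0:ℝ) 1,
      g (t * x + (1 - t) * y) ≤ g x ^ t * g y ^ (1 - t))
    (hgab : g a = g b) :
    sugenoIntegral volume (Icc a b) (fun x => ENNReal.ofReal (g x)) ≤
      min (ENNReal.ofReal (g a)) (ENNReal.ofReal (b - a)) := by
  have hba : (0:ℝ) < b - a := sub_pos.mpr hab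
  have ha : a ∈ Icc a b := ⟨le_refl a, hab.le⟩
  have hb : b ∈ Icc a b := ⟨hab.le, le_refl b⟩
  have hga : 0 < g a := hg_pos a ha
  have key : ∀ x ∈ Icc a b, g x ≤ g a := by
    intro x hx
    set t := (b - x) / (b - a) with ht_def
    have ht : t ∈ Icc (0:ℝ) 1 := by
      constructor
      · exact div_nonneg (by linarith [hx.2]) hba.le
      · rw [div_le_one hba]; linarith [hx.1]
    have hx' : t * a + (1 - t) * b = x := by
      rw [ht_def]
      field_simp [hba.ne']
      ring
    have h := hg_logconvex a ha b hb t ht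
    rw [hx', ← hgab, ← Real.rpow_add hga, add_sub_cancel, Real.rpow_one] at h
    exact h
  rw [sugenoIntegral]
  refine iSup_le fun α => ?_
  refine le_min ?_ ?_
  · by_cases hα : α ≤ ENNReal.ofReal (g a)
    · exact le_trans (min_le_left _ _) hα
    · have hempty : Icc a b ∩ {x | α ≤ ENNReal.ofReal (g x)} = ∅ := by
        ext x
        simp only [mem_inter_iff, mem_setOf_eq, mem_empty_iff_false, iff_false, not_and]
        intro hx hle
        exact hα (le_trans hle (ENNReal.ofReal_le_ofReal (key x hx)))
      rw [hempty]
      simp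
  · refine le_trans (min_le_right _ _) ?_
    calc volume (Icc a b ∩ {x | α ≤ ENNReal.ofReal (g x)})
        ≤ volume (Icc a b) := measure_mono inter_subset_left
      _ = ENNReal.ofReal (b - a) := Real.volume_Icc
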